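/- Suppose a sequence δ_t in R^d satisfies δ_0 = 0 and E‖δ_t‖² ≤ α² E‖g_t - δ_{t-1}‖² for all t ≥ 1, where α ∈ [0,1) and E‖g_t‖² ≤ G² for all t. Then for any ρ > 0 with (1+1/ρ)α² < 1 and (1+ρ)α² < 1, E‖δ_t‖² ≤ G² / (1 - (1+ρ)α²) for all t. -/
import Mathlib


open MeasureTheory

/-- boundedness of the accumulated compression error of a contraction
compressor, via Young's inequality and unrolling the geometric recursion. -/
theorem error_accumulation_bounded {d : ℕ} {Ω : Type*} {m0 : MeasurableSpace Ω}
    (μ : Measure Ω) [IsProbabilityMeasure μ]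
    (α ρ G : ℝ) (hα0 : 0 ≤ α) (hα1 : α < 1) (hρ : 0 < ρ)
    (h1 : (1 + 1 / ρ) * α ^ 2 < 1) (h2 : (1 + ρ) * α ^ 2 < 1)
    (δ g : ℕ → Ω → EuclideanSpace ℝ (Fin d))
    (hδmeas : ∀ t, AEStronglyMeasurable (δ t) μ)
    (hgmeas : ∀ t, AEStronglyMeasurable (g t) μ)
    (hδint : ∀ t, Integrable (fun ω => ‖δ t ω‖ ^ 2) μ)
    (hgint : ∀ t, Integrable (fun ω => ‖g t ω‖ ^ 2) μ)
    (hδ0 : δ 0 = fun _ => 0)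
    (hrec : ∀ t : ℕ, 1 ≤ t →
      ∫ ω, ‖δ t ω‖ ^ 2 ∂μ ≤ α ^ 2 * ∫ ω, ‖g t ω - δ (t - 1) ω‖ ^ 2 ∂μ)
    (hG : ∀ t, ∫ ω, ‖g t ω‖ ^ 2 ∂μ ≤ G ^ 2) :
    ∀ t, ∫ ω, ‖δ t ω‖ ^ 2 ∂μ ≤ G ^ 2 / (1 - (1 + ρ) * α ^ 2) := by
  have hden : 0 < 1 - (1 + ρ) * α ^ 2 := by linarith
  have hG2 : 0 ≤ G ^ 2 := sq_nonneg G
  have hC : 0 ≤ G ^ 2 / (1 - (1 + ρ) * α ^ 2) := div_nonneg hG2 hden.le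
  intro t
  induction t with
  | zero => simpa [hδ0] using hC
  | succ n ih =>
    -- pointwise Young bound
    have hpt : ∀ ω, ‖g (n + 1) ω - δ n ω‖ ^ 2 ≤
        (1 + 1 / ρ) * ‖g (n + 1) ω‖ ^ 2 + (1 + ρ) * ‖δ n ω‖ ^ 2 := by
      intro ω
      have h := norm_sub_le (g (n + 1) ω) (δ n ω)
      have hx : 0 ≤ ‖g (n + 1) ω‖ := norm_nonneg _
      have hy : 0 ≤ ‖δ n ω‖ := norm_nonneg _
      have hs : 0 ≤ ‖g (n + 1) ω - δ n ω‖ := norm_nonneg _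
      have hsq : ‖g (n + 1) ω - δ n ω‖ ^ 2 ≤ (‖g (n + 1) ω‖ + ‖δ n ω‖) ^ 2 := by
        nlinarith
      have hyoung : (‖g (n + 1) ω‖ + ‖δ n ω‖) ^ 2 ≤
          (1 + 1 / ρ) * ‖g (n + 1) ω‖ ^ 2 + (1 + ρ) * ‖δ n ω‖ ^ 2 := by
        have h2xy : 2 * ‖g (n + 1) ω‖ * ‖δ n ω‖ ≤
            (1 / ρ) * ‖g (n + 1) ω‖ ^ 2 + ρ * ‖δ n ω‖ ^ 2 := by
          rw [← sub_nonneg]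
          have heq : (1 / ρ) * ‖g (n + 1) ω‖ ^ 2 + ρ * ‖δ n ω‖ ^ 2
              - 2 * ‖g (n + 1) ω‖ * ‖δ n ω‖
              = (‖g (n + 1) ω‖ - ρ * ‖δ n ω‖) ^ 2 / ρ := by
            field_simp
            ring
          rw [heq]
          positivity
        nlinarith
      linarith
    have hintd : Integrable (fun ω => ‖g (n + 1) ω - δ n ω‖ ^ 2) μ := by
      have hmeas : AEStronglyMeasurable (fun ω => ‖g (n + 1) ω - δ n ω‖ ^ 2) μ :=
        (((hgmeas (n + 1)).sub (hδmeas n)).norm.pow 2)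
      refine Integrable.mono' (((hgint (n + 1)).const_mul (1 + 1 / ρ)).add
        ((hδint n).const_mul (1 + ρ))) hmeas ?_
      filter_upwards with ω
      rw [Real.norm_eq_abs, abs_of_nonneg (by positivity)]
      exact hpt ω
    have key : ∫ ω, ‖g (n + 1) ω - δ n ω‖ ^ 2 ∂μ ≤
        (1 + 1 / ρ) * ∫ ω, ‖g (n + 1) ω‖ ^ 2 ∂μ + (1 + ρ) * ∫ ω, ‖δ n ω‖ ^ 2 ∂μ := by
      have := integral_mono hintd (((hgint (n + 1)).const_mul (1 + 1 / ρ)).add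
        ((hδint n).const_mul (1 + ρ))) hpt
      simp only [Pi.add_apply] at this
      rwa [integral_add ((hgint (n + 1)).const_mul _) ((hδint n).const_mul _),
        integral_const_mul, integral_const_mul] at this
    have hrec' := hrec (n + 1) (Nat.le_add_left 1 n)
    simp only [Nat.add_sub_cancel] at hrec'
    have hα2 : 0 ≤ α ^ 2 := sq_nonneg α
    have hGn := hG (n + 1)
    have step : ∫ ω, ‖δ (n + 1) ω‖ ^ 2 ∂μ ≤
        α ^ 2 * ((1 + 1 / ρ) * G ^ 2 + (1 + ρ) * (G ^ 2 / (1 - (1 + ρ) * α ^ 2))) := by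
      calc ∫ ω, ‖δ (n + 1) ω‖ ^ 2 ∂μ ≤ α ^ 2 * ∫ ω, ‖g (n + 1) ω - δ n ω‖ ^ 2 ∂μ := hrec'
        _ ≤ α ^ 2 * ((1 + 1 / ρ) * ∫ ω, ‖g (n + 1) ω‖ ^ 2 ∂μ + (1 + ρ) * ∫ ω, ‖δ n ω‖ ^ 2 ∂μ) :=
            mul_le_mul_of_nonneg_left key hα2
        _ ≤ _ := by
            have hρ1 : 0 ≤ 1 + 1 / ρ := by positivity
            have hρ2 : 0 ≤ 1 + ρ := by positivity
            exact mul_le_mul_of_nonneg_left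
              (add_le_add (mul_le_mul_of_nonneg_left hGn hρ1)
                (mul_le_mul_of_nonneg_left ih hρ2)) hα2
    refine step.trans ?_
    have hCeq : (G ^ 2 / (1 - (1 + ρ) * α ^ 2)) * (1 - (1 + ρ) * α ^ 2) = G ^ 2 :=
      div_mul_cancel₀ _ hden.ne'
    set C := G ^ 2 / (1 - (1 + ρ) * α ^ 2) with hCdef
    have hkey : α ^ 2 * ((1 + 1 / ρ) * G ^ 2) ≤ G ^ 2 := by nlinarith [h1, hG2]
    nlinarith [hC, hCeq, hkey, hα2]
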